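/- For β ∈ (0, 6π), the function u ↦ |u|^{−β/(2π)} e^{−(β/(4π))Γ(0,|u|²)} on ℝ², where Γ(0,r) = ∫_r^∞ e^{-t}/t dt is the incomplete gamma function, is integrable on ℝ² if β > 4π, and for β = 4π one has ∫_{|u|≤R} |u|^{−2} e^{−Γ(0,|u|²)} du = 2π log R + O(1) as R → ∞. -/

import Mathlib

open MeasureTheory Set Real

noncomputable def Gam (s : ℝ) : ℝ := ∫ t in Set.Ioi s, Real.exp (-t) / t

lemma measurable_Gam : Measurable Gam := by
  have h : Measurable fun p : ℝ × ℝ =>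
      Set.indicator {q : ℝ × ℝ | q.1 < q.2} (fun q : ℝ × ℝ => Real.exp (-q.2) / q.2) p := by
    exact Measurable.indicator (by fun_prop) measurableSet_lt'
  have := h.stronglyMeasurable.integral_prod_right' (ν := (volume : Measure ℝ))
  have heq : (fun s : ℝ => ∫ t, Set.indicator {q : ℝ × ℝ | q.1 < q.2}
      (fun q : ℝ × ℝ => Real.exp (-q.2) / q.2) (s, t)) = Gam := by
    funext s
    rw [Gam, ← integral_indicator measurableSet_Ioi]
    congr 1
  rw [heq] at this
  exact this.measurable

lemma Gam_integrableOn {s : ℝ} (hs : 0 < s) :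
    IntegrableOn (fun t => Real.exp (-t) / t) (Set.Ioi s) := by
  have hm : Measurable fun t : ℝ => Real.exp (-t) / t := by fun_prop
  refine ((exp_neg_integrableOn_Ioi s one_pos).div_const s).mono'
    hm.aestronglyMeasurable.restrict ?_
  filter_upwards [ae_restrict_mem measurableSet_Ioi] with t ht
  rw [Real.norm_eq_abs, abs_div, abs_of_pos (Real.exp_pos _), abs_of_pos (hs.trans ht)]
  simp only [neg_mul, one_mul]
  exact div_le_div_of_nonneg_left (Real.exp_pos _).le hs ht.le

lemma Gam_nonneg {s : ℝ} (hs : 0 < s) : 0 ≤ Gam s := by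
  refine setIntegral_nonneg measurableSet_Ioi fun t ht => ?_
  exact div_nonneg (Real.exp_pos _).le (hs.trans ht).le

lemma Gam_antitoneOn : AntitoneOn Gam (Set.Ioi 0) := by
  intro a ha b hb hab
  refine setIntegral_mono_set (Gam_integrableOn ha) ?_ ?_
  · filter_upwards [ae_restrict_mem measurableSet_Ioi] with t ht
    exact div_nonneg (Real.exp_pos _).le ((ha.trans ht)).le
  · exact HasSubset.Subset.eventuallyLE (Set.Ioi_subset_Ioi hab)

lemma Gam_le {s : ℝ} (hs : 0 < s) : Gam s ≤ Real.exp (-s) / s := by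
  have hi : IntegrableOn (fun t : ℝ => Real.exp (-t)) (Set.Ioi s) := by
    have := exp_neg_integrableOn_Ioi s one_pos
    simpa using this
  have h1 : Gam s ≤ ∫ t in Set.Ioi s, Real.exp (-t) / s := by
    refine setIntegral_mono_on (Gam_integrableOn hs) (hi.div_const s)
      measurableSet_Ioi fun t ht => ?_
    exact div_le_div_of_nonneg_left (Real.exp_pos _).le hs ht.le
  calc Gam s ≤ ∫ t in Set.Ioi s, Real.exp (-t) / s := h1
    _ = (∫ t in Set.Ioi s, Real.exp (-t)) / s := integral_div _ _
    _ = Real.exp (-s) / s := by rw [integral_exp_neg_Ioi]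

lemma Gam_ge {s : ℝ} (hs0 : 0 < s) (hs1 : s ≤ 1) : -Real.log s - 1 ≤ Gam s := by
  have hsub : Set.Ioc s 1 ⊆ Set.Ioi s := Set.Ioc_subset_Ioi_self
  have hint1 : IntegrableOn (fun t : ℝ => 1 / t - 1) (Set.Ioc s 1) := by
    apply (ContinuousOn.integrableOn_compact isCompact_Icc ?_).mono_set Set.Ioc_subset_Icc_self
    intro t ht
    exact (((continuousOn_const).div continuousOn_id
      (fun x hx => ne_of_gt (lt_of_lt_of_le hs0 hx.1))).sub continuousOn_const) t ht
  have step1 : ∫ t in Set.Ioc s 1, (1 / t - 1) ≤ ∫ t in Set.Ioc s 1, Real.exp (-t) / t := by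
    refine setIntegral_mono_on hint1 ((Gam_integrableOn hs0).mono_set hsub)
      measurableSet_Ioc fun t ht => ?_
    have ht0 : 0 < t := hs0.trans ht.1
    rw [div_sub' ht0.ne', div_le_div_iff_of_pos_right ht0]
    have := Real.add_one_le_exp (-t)
    linarith
  have step2 : ∫ t in Set.Ioc s 1, Real.exp (-t) / t ≤ Gam s := by
    refine setIntegral_mono_set (Gam_integrableOn hs0) ?_ hsub.eventuallyLE
    filter_upwards [ae_restrict_mem measurableSet_Ioi] with t ht
    exact div_nonneg (Real.exp_pos _).le ((hs0.trans ht)).le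
  have hcomp : ∫ t in Set.Ioc s 1, (1 / t - 1) = -Real.log s - (1 - s) := by
    rw [← intervalIntegral.integral_of_le hs1]
    rw [intervalIntegral.integral_sub (intervalIntegral.intervalIntegrable_one_div
        (fun x hx => ne_of_gt (lt_of_lt_of_le hs0 ((Set.uIcc_of_le hs1) ▸ hx).1)) (by fun_prop))
      (_root_.intervalIntegrable_const (c := (1:ℝ)))]
    rw [integral_one_div (fun h => (lt_of_lt_of_le hs0 ((Set.uIcc_of_le hs1) ▸ h).1).ne rfl)]
    simp [Real.log_div, hs0.ne']
  linarith [step1, step2, hcomp ▸ step1]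

lemma exp_neg_Gam_sq_le {y c : ℝ} (hy0 : 0 < y) (hy1 : y ≤ 1) (hc : 0 ≤ c) :
    Real.exp (-c * Gam (y ^ 2)) ≤ Real.exp c * y ^ (2 * c) := by
  have hy2 : 0 < y ^ 2 := by positivity
  have hy21 : y ^ 2 ≤ 1 := pow_le_one₀ hy0.le hy1
  have h := Gam_ge hy2 hy21
  have h2 : -c * Gam (y ^ 2) ≤ c * Real.log (y ^ 2) + c := by nlinarith
  calc Real.exp (-c * Gam (y ^ 2)) ≤ Real.exp (c * Real.log (y ^ 2) + c) :=
        Real.exp_le_exp.2 h2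
    _ = Real.exp c * y ^ (2 * c) := by
        rw [Real.exp_add, mul_comm (Real.exp _)]
        congr 1
        rw [mul_comm c, ← Real.rpow_def_of_pos hy2, ← Real.rpow_natCast y 2,
          ← Real.rpow_mul hy0.le]
        norm_num

lemma part1 (β : ℝ) (hβ : 4 * Real.pi < β) (hβ' : β < 6 * Real.pi) :
    Integrable (fun u : EuclideanSpace ℝ (Fin 2) =>
      ‖u‖ ^ (-(β / (2 * Real.pi))) *
        Real.exp (-(β / (4 * Real.pi)) * ∫ t in Set.Ioi (‖u‖ ^ 2), Real.exp (-t) / t)) := by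
  set α : ℝ := β / (2 * Real.pi) with hα
  set c : ℝ := β / (4 * Real.pi) with hc
  have hπ : 0 < Real.pi := Real.pi_pos
  have hα2 : 2 < α := by rw [hα, lt_div_iff₀ (by positivity)]; linarith
  have hc0 : 0 < c := by rw [hc]; exact div_pos (by linarith) (by positivity)
  have h2c : 2 * c = α := by rw [hα, hc]; field_simp; ring
  set K : ℝ := Real.exp c * 2 ^ α with hK
  have hK0 : 0 < K := by positivity
  have hmeas : Measurable (fun u : EuclideanSpace ℝ (Fin 2) =>
      ‖u‖ ^ (-α) * Real.exp (-c * Gam (‖u‖ ^ 2))) := by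
    have h1 : Measurable (fun u : EuclideanSpace ℝ (Fin 2) => Gam (‖u‖ ^ 2)) :=
      measurable_Gam.comp ((measurable_norm).pow_const 2)
    fun_prop
  have hbound : ∀ u : EuclideanSpace ℝ (Fin 2),
      ‖u‖ ^ (-α) * Real.exp (-c * Gam (‖u‖ ^ 2)) ≤ K * (1 + ‖u‖) ^ (-α) := by
    intro u
    have hKrw : ∀ y : ℝ, 0 < y → 1 + y ≤ 2 * y → y ^ (-α) ≤ 2 ^ α * (1 + y) ^ (-α) := by
      intro y hy hle
      have h1 : (1 + y) ^ (-α) ≥ (2 * y) ^ (-α) :=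
        Real.rpow_le_rpow_of_nonpos (by positivity) hle (by linarith)
      have h2 : (2 * y) ^ (-α) = 2 ^ (-α) * y ^ (-α) :=
        Real.mul_rpow (by norm_num) hy.le
      have h3 : (2:ℝ) ^ α * 2 ^ (-α) = 1 := by
        rw [← Real.rpow_add (by norm_num)]; simp
      nlinarith [Real.rpow_nonneg (by positivity : (0:ℝ) ≤ 1 + y) (-α),
        Real.rpow_pos_of_pos (by norm_num : (0:ℝ) < 2) α, Real.rpow_nonneg hy.le (-α)]
    rcases eq_or_lt_of_le (norm_nonneg u) with h0 | h0
    · rw [← h0, Real.zero_rpow (ne_of_lt (by linarith : -α < 0)), zero_mul]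
      positivity
    rcases le_or_gt ‖u‖ 1 with h1 | h1
    · -- small case
      have hexp := exp_neg_Gam_sq_le h0 h1 hc0.le
      have hfle : ‖u‖ ^ (-α) * Real.exp (-c * Gam (‖u‖ ^ 2)) ≤ Real.exp c := by
        calc ‖u‖ ^ (-α) * Real.exp (-c * Gam (‖u‖ ^ 2))
            ≤ ‖u‖ ^ (-α) * (Real.exp c * ‖u‖ ^ (2 * c)) := by
              exact mul_le_mul_of_nonneg_left hexp (Real.rpow_nonneg (norm_nonneg u) _)
          _ = Real.exp c * ‖u‖ ^ (-α + 2 * c) := by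
              rw [Real.rpow_add h0]; ring
          _ = Real.exp c := by rw [h2c]; simp
      have h2a : (2:ℝ) ^ (-α) ≤ (1 + ‖u‖) ^ (-α) :=
        Real.rpow_le_rpow_of_nonpos (by positivity) (by linarith) (by linarith)
      have h3 : (2:ℝ) ^ α * 2 ^ (-α) = 1 := by
        rw [← Real.rpow_add (by norm_num)]; simp
      have : Real.exp c ≤ K * (1 + ‖u‖) ^ (-α) := by
        rw [hK]
        nlinarith [Real.exp_pos c, Real.rpow_pos_of_pos (by norm_num : (0:ℝ) < 2) α]
      linarith
    · -- large case
      have hGam : 0 ≤ Gam (‖u‖ ^ 2) := Gam_nonneg (by positivity)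
      have hexp : Real.exp (-c * Gam (‖u‖ ^ 2)) ≤ 1 := by
        rw [← Real.exp_zero]
        exact Real.exp_le_exp.2 (by nlinarith)
      have hfle : ‖u‖ ^ (-α) * Real.exp (-c * Gam (‖u‖ ^ 2)) ≤ ‖u‖ ^ (-α) :=
        mul_le_of_le_one_right (Real.rpow_nonneg (norm_nonneg u) _) hexp
      have := hKrw ‖u‖ h0 (by linarith)
      have hexpc : (1:ℝ) ≤ Real.exp c := Real.one_le_exp hc0.le
      have hnn : 0 ≤ (2:ℝ) ^ α * (1 + ‖u‖) ^ (-α) := by positivity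
      calc ‖u‖ ^ (-α) * Real.exp (-c * Gam (‖u‖ ^ 2)) ≤ ‖u‖ ^ (-α) := hfle
        _ ≤ 2 ^ α * (1 + ‖u‖) ^ (-α) := this
        _ ≤ K * (1 + ‖u‖) ^ (-α) := by
            rw [hK]
            nlinarith [Real.rpow_nonneg (by positivity : (0:ℝ) ≤ 1 + ‖u‖) (-α),
              Real.rpow_pos_of_pos (by norm_num : (0:ℝ) < 2) α]
  have hint : Integrable (fun u : EuclideanSpace ℝ (Fin 2) => K * (1 + ‖u‖) ^ (-α)) :=
    (integrable_one_add_norm (by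
      rw [finrank_euclideanSpace_fin]; exact_mod_cast hα2)).const_mul K
  refine hint.mono' hmeas.aestronglyMeasurable (Filter.Eventually.of_forall fun u => ?_)
  rw [Real.norm_eq_abs, abs_of_nonneg (by positivity)]
  exact hbound u

noncomputable def qq (y : ℝ) : ℝ := Real.exp (-Gam (y ^ 2)) / y

lemma qq_meas : Measurable qq := by
  have h1 : Measurable fun y : ℝ => Gam (y ^ 2) := measurable_Gam.comp (measurable_id.pow_const 2)
  unfold qq; fun_prop

lemma qq_nonneg (y : ℝ) (hy : 0 ≤ y) : 0 ≤ qq y := by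
  unfold qq; positivity

lemma qq_le_small {y : ℝ} (hy0 : 0 < y) (hy1 : y ≤ 1) : qq y ≤ Real.exp 1 * y := by
  have h := exp_neg_Gam_sq_le (c := 1) hy0 hy1 zero_le_one
  rw [neg_one_mul] at h
  have h2 : y ^ ((2:ℝ) * 1) = y ^ 2 := by
    rw [mul_one, ← Real.rpow_natCast y 2]; norm_num
  rw [h2] at h
  have : qq y ≤ (Real.exp 1 * y ^ 2) / y := by
    unfold qq; gcongr
  calc qq y ≤ (Real.exp 1 * y ^ 2) / y := this
    _ = Real.exp 1 * y := by field_simp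

lemma qq_integrableOn_small : IntegrableOn qq (Set.Ioc 0 1) := by
  refine (integrableOn_const (C := Real.exp 1) measure_Ioc_lt_top.ne).mono'
    qq_meas.aestronglyMeasurable.restrict ?_
  filter_upwards [ae_restrict_mem measurableSet_Ioc] with y hy
  rw [Real.norm_eq_abs, abs_of_nonneg (qq_nonneg y hy.1.le)]
  calc qq y ≤ Real.exp 1 * y := qq_le_small hy.1 hy.2
    _ ≤ Real.exp 1 * 1 := mul_le_mul_of_nonneg_left hy.2 (Real.exp_pos 1).le
    _ = Real.exp 1 := mul_one _

lemma abs_int_qq_small : |∫ y in Set.Ioc (0:ℝ) 1, qq y| ≤ Real.exp 1 := by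
  have h := norm_setIntegral_le_of_norm_le_const (μ := volume) (s := Set.Ioc (0:ℝ) 1)
    (C := Real.exp 1) (f := qq) measure_Ioc_lt_top (fun y hy => by
      rw [Real.norm_eq_abs, abs_of_nonneg (qq_nonneg y hy.1.le)]
      calc qq y ≤ Real.exp 1 * y := qq_le_small hy.1 hy.2
        _ ≤ Real.exp 1 * 1 := mul_le_mul_of_nonneg_left hy.2 (Real.exp_pos 1).le
        _ = Real.exp 1 := mul_one _)
  rw [Real.norm_eq_abs] at h
  calc |∫ y in Set.Ioc (0:ℝ) 1, qq y| ≤ Real.exp 1 * (volume (Set.Ioc (0:ℝ) 1)).toReal := h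
    _ = Real.exp 1 := by simp [Real.volume_Ioc]

lemma qq_le_big {y : ℝ} (hy : 1 ≤ y) : qq y ≤ 1 / y := by
  have hy0 : 0 < y := lt_of_lt_of_le one_pos hy
  have hG : 0 ≤ Gam (y ^ 2) := Gam_nonneg (by positivity)
  have : Real.exp (-Gam (y ^ 2)) ≤ 1 := by
    rw [← Real.exp_zero]; exact Real.exp_le_exp.2 (by linarith)
  unfold qq; gcongr

lemma qq_integrableOn_big {R : ℝ} (hR : 1 ≤ R) : IntegrableOn qq (Set.Ioc 1 R) := by
  refine (integrableOn_const (C := (1:ℝ)) measure_Ioc_lt_top.ne).mono'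
    qq_meas.aestronglyMeasurable.restrict ?_
  filter_upwards [ae_restrict_mem measurableSet_Ioc] with y hy
  rw [Real.norm_eq_abs, abs_of_nonneg (qq_nonneg y (by linarith [hy.1]))]
  calc qq y ≤ 1 / y := qq_le_big hy.1.le
    _ ≤ 1 / 1 := by gcongr; exact hy.1.le
    _ = 1 := by norm_num

lemma one_div_integrableOn_big {R : ℝ} (hR : 1 ≤ R) :
    IntegrableOn (fun y : ℝ => 1 / y) (Set.Ioc 1 R) := by
  have hm : Measurable fun y : ℝ => 1 / y := by fun_prop
  refine (integrableOn_const (C := (1:ℝ)) measure_Ioc_lt_top.ne).mono'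
    hm.aestronglyMeasurable.restrict ?_
  filter_upwards [ae_restrict_mem measurableSet_Ioc] with y hy
  have hy0 : (0:ℝ) < y := lt_trans one_pos hy.1
  rw [Real.norm_eq_abs, abs_of_nonneg (by positivity)]
  rw [div_le_one hy0]
  exact hy.1.le

lemma rpow3_integrableOn : IntegrableOn (fun y : ℝ => y ^ (-3 : ℝ)) (Set.Ioi 1) :=
  integrableOn_Ioi_rpow_of_lt (by norm_num) one_pos

lemma abs_qq_sub_le {y : ℝ} (hy : 1 ≤ y) : |qq y - 1 / y| ≤ y ^ (-3 : ℝ) := by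
  have hy0 : 0 < y := lt_of_lt_of_le one_pos hy
  have hy2 : (0:ℝ) < y ^ 2 := by positivity
  have hG0 : 0 ≤ Gam (y ^ 2) := Gam_nonneg hy2
  have hGle : Gam (y ^ 2) ≤ 1 / y ^ 2 := by
    calc Gam (y ^ 2) ≤ Real.exp (-(y ^ 2)) / y ^ 2 := Gam_le hy2
      _ ≤ 1 / y ^ 2 := by
          gcongr
          rw [← Real.exp_zero]; exact Real.exp_le_exp.2 (by linarith)
  have hexp_le : Real.exp (-Gam (y ^ 2)) ≤ 1 := by
    rw [← Real.exp_zero]; exact Real.exp_le_exp.2 (by linarith)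
  have hexp_ge : 1 - Gam (y ^ 2) ≤ Real.exp (-Gam (y ^ 2)) := by
    have := Real.add_one_le_exp (-Gam (y ^ 2)); linarith
  have hrw : qq y - 1 / y = (Real.exp (-Gam (y ^ 2)) - 1) / y := by
    unfold qq; field_simp
  have hrpow : y ^ (-3 : ℝ) = 1 / y ^ 2 / y := by
    rw [show (-3:ℝ) = -((3:ℕ):ℝ) by norm_num, Real.rpow_neg hy0.le, Real.rpow_natCast]
    field_simp
  rw [hrw, abs_div, abs_of_pos hy0, hrpow]
  gcongr
  rw [abs_sub_comm, abs_of_nonneg (by linarith)]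
  linarith

lemma err_bound {R : ℝ} (hR : 1 ≤ R) :
    |(∫ y in Set.Ioc (1:ℝ) R, qq y) - Real.log R| ≤ 1 / 2 := by
  have hlog : (∫ y in Set.Ioc (1:ℝ) R, 1 / y) = Real.log R := by
    rw [← intervalIntegral.integral_of_le hR,
      integral_one_div (fun h => by
        have := (Set.uIcc_of_le hR ▸ h).1; norm_num at this)]
    simp
  have hsub : (∫ y in Set.Ioc (1:ℝ) R, qq y) - Real.log R
      = ∫ y in Set.Ioc (1:ℝ) R, (qq y - 1 / y) := by
    rw [integral_sub (qq_integrableOn_big hR) (one_div_integrableOn_big hR), hlog]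
  rw [hsub]
  have h1 : |∫ y in Set.Ioc (1:ℝ) R, (qq y - 1 / y)|
      ≤ ∫ y in Set.Ioc (1:ℝ) R, |qq y - 1 / y| := by
    rw [← Real.norm_eq_abs]
    exact (norm_integral_le_integral_norm _).trans (le_of_eq (by simp [Real.norm_eq_abs]))
  have h2 : (∫ y in Set.Ioc (1:ℝ) R, |qq y - 1 / y|)
      ≤ ∫ y in Set.Ioc (1:ℝ) R, y ^ (-3 : ℝ) := by
    refine setIntegral_mono_on
      ((qq_integrableOn_big hR).sub (one_div_integrableOn_big hR)).abs
      (rpow3_integrableOn.mono_set Set.Ioc_subset_Ioi_self)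
      measurableSet_Ioc fun y hy => abs_qq_sub_le hy.1.le
  have h3 : (∫ y in Set.Ioc (1:ℝ) R, y ^ (-3 : ℝ)) ≤ ∫ y in Set.Ioi (1:ℝ), y ^ (-3 : ℝ) := by
    refine setIntegral_mono_set rpow3_integrableOn ?_
      (Set.Ioc_subset_Ioi_self).eventuallyLE
    filter_upwards [ae_restrict_mem measurableSet_Ioi] with y hy
    exact Real.rpow_nonneg (by linarith [Set.mem_Ioi.1 hy]) _
  have h4 : (∫ y in Set.Ioi (1:ℝ), y ^ (-3 : ℝ)) = 1 / 2 := by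
    rw [integral_Ioi_rpow_of_lt (by norm_num) one_pos]
    norm_num
  linarith

lemma radial (R : ℝ) :
    (∫ u in {u : EuclideanSpace ℝ (Fin 2) | ‖u‖ ≤ R},
        Real.exp (-Gam (‖u‖ ^ 2)) / ‖u‖ ^ 2)
      = 2 * Real.pi * ∫ y in Set.Ioc (0:ℝ) R, qq y := by
  set E := EuclideanSpace ℝ (Fin 2)
  set h : ℝ → ℝ := fun y => Real.exp (-Gam (y ^ 2)) / y ^ 2 with hh
  set F : ℝ → ℝ := Set.indicator (Set.Iic R) h with hF
  have hset : MeasurableSet {u : E | ‖u‖ ≤ R} :=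
    (isClosed_le continuous_norm continuous_const).measurableSet
  have step1 : (∫ u in {u : E | ‖u‖ ≤ R}, Real.exp (-Gam (‖u‖ ^ 2)) / ‖u‖ ^ 2)
      = ∫ u : E, F ‖u‖ := by
    rw [← integral_indicator hset]
    congr 1
  have hdim : Module.finrank ℝ E = 2 := finrank_euclideanSpace_fin
  have step2 : (∫ u : E, F ‖u‖)
      = 2 • ((volume (Metric.ball (0:E) 1)).toReal • ∫ y in Set.Ioi (0:ℝ), y ^ 1 • F y) := by
    rw [integral_fun_norm_addHaar (volume : Measure E) F, hdim]
    rfl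
  have hball : (volume (Metric.ball (0:E) 1)).toReal = Real.pi := by
    rw [EuclideanSpace.volume_ball]
    norm_num [Real.Gamma_two, Real.sq_sqrt Real.pi_pos.le,
      ENNReal.toReal_ofReal Real.pi_pos.le]
  have step3 : (∫ y in Set.Ioi (0:ℝ), y ^ 1 • F y) = ∫ y in Set.Ioc (0:ℝ) R, qq y := by
    have hrw : (fun y : ℝ => y ^ 1 • F y)
        = Set.indicator (Set.Iic R) (fun y => y * h y) := by
      funext y
      simp only [hF, pow_one, smul_eq_mul, Set.indicator_apply]
      split <;> simp
    rw [hrw, integral_indicator measurableSet_Iic,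
      Measure.restrict_restrict measurableSet_Iic, Set.Iic_inter_Ioi]
    refine setIntegral_congr_fun measurableSet_Ioc fun y hy => ?_
    have hy0 : y ≠ 0 := hy.1.ne'
    simp only [hh, qq]
    field_simp
  rw [step1, step2, hball, step3]
  simp only [nsmul_eq_mul, smul_eq_mul]
  ring

/-- With `Γ(0,r) = ∫_r^∞ e^{-t}/t dt`, the function `u ↦ |u|^{−β/(2π)} e^{−(β/(4π))Γ(0,|u|²)}`
on `ℝ²` is integrable for `4π < β < 6π`, and for `β = 4π`,
`∫_{|u|≤R} |u|^{−2} e^{−Γ(0,|u|²)} du = 2π log R + O(1)` as `R → ∞`. -/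
theorem stmt17 :
    (∀ β : ℝ, 4 * Real.pi < β → β < 6 * Real.pi →
      Integrable (fun u : EuclideanSpace ℝ (Fin 2) =>
        ‖u‖ ^ (-(β / (2 * Real.pi))) *
          Real.exp (-(β / (4 * Real.pi)) * ∫ t in Set.Ioi (‖u‖ ^ 2), Real.exp (-t) / t))) ∧
    (∃ C : ℝ, ∀ R : ℝ, 2 ≤ R →
      |(∫ u in {u : EuclideanSpace ℝ (Fin 2) | ‖u‖ ≤ R},
          Real.exp (-(∫ t in Set.Ioi (‖u‖ ^ 2), Real.exp (-t) / t)) / ‖u‖ ^ 2)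
        - 2 * Real.pi * Real.log R| ≤ C) := by
  constructor
  · exact part1
  · refine ⟨2 * Real.pi * (Real.exp 1 + 1), fun R hR => ?_⟩
    have hπ : 0 < Real.pi := Real.pi_pos
    have h1R : (1:ℝ) ≤ R := by linarith
    have hrad : (∫ u in {u : EuclideanSpace ℝ (Fin 2) | ‖u‖ ≤ R},
        Real.exp (-(∫ t in Set.Ioi (‖u‖ ^ 2), Real.exp (-t) / t)) / ‖u‖ ^ 2)
        = 2 * Real.pi * ∫ y in Set.Ioc (0:ℝ) R, qq y := radial R
    rw [hrad]
    have hsplit : (∫ y in Set.Ioc (0:ℝ) R, qq y)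
        = (∫ y in Set.Ioc (0:ℝ) 1, qq y) + ∫ y in Set.Ioc (1:ℝ) R, qq y := by
      rw [← setIntegral_union (Set.Ioc_disjoint_Ioc_of_le le_rfl) measurableSet_Ioc
        qq_integrableOn_small (qq_integrableOn_big h1R),
        Set.Ioc_union_Ioc_eq_Ioc zero_le_one h1R]
    rw [hsplit]
    set A := ∫ y in Set.Ioc (0:ℝ) 1, qq y
    set B := ∫ y in Set.Ioc (1:ℝ) R, qq y
    have hA := abs_int_qq_small
    have hB := err_bound h1R
    have hrw : 2 * Real.pi * (A + B) - 2 * Real.pi * Real.log R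
        = 2 * Real.pi * (A + (B - Real.log R)) := by ring
    rw [hrw, abs_mul, abs_of_pos (by positivity : (0:ℝ) < 2 * Real.pi)]
    have habs : |A + (B - Real.log R)| ≤ Real.exp 1 + 1 := by
      calc |A + (B - Real.log R)| ≤ |A| + |B - Real.log R| := abs_add_le _ _
        _ ≤ Real.exp 1 + 1 / 2 := add_le_add hA hB
        _ ≤ Real.exp 1 + 1 := by norm_num
    exact mul_le_mul_of_nonneg_left habs (by positivity)
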